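/- Let R be an integral domain, M a maximal ideal of R of height one, and I an ideal of the localization R_M. If C and D are ideals of R_M with I = CD, then I ∩ R = (C ∩ R)(D ∩ R). Moreover, I is the unique ideal of R_M whose contraction to R equals I ∩ R. -/

import Mathlib

section Aux

variable {R : Type*} [CommRing R] [IsDomain R] (M : Ideal R) [hp : M.IsPrime]

/-- Contraction of the extension of an `M`-primary ideal is itself. -/
lemma aux_comap_map (Q : Ideal R) (hQ : Q.IsPrimary) (hrad : Q.radical = M) :
    (Q.map (algebraMap R (Localization.AtPrime M))).comap
      (algebraMap R (Localization.AtPrime M)) = Q := by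
  ext r
  simp only [Ideal.mem_comap]
  constructor
  · intro hr
    obtain ⟨⟨⟨q, hq⟩, s⟩, h⟩ := (IsLocalization.mem_map_algebraMap_iff M.primeCompl _).1 hr
    rw [← map_mul] at h
    have h' : r * (s : R) = q :=
      IsLocalization.injective (Localization.AtPrime M)
        M.primeCompl_le_nonZeroDivisors h
    have := ((Ideal.isPrimary_iff).1 hQ).2 (h' ▸ hq)
    rcases this with h1 | h2
    · exact h1
    · exact absurd (hrad ▸ h2) s.2
  · intro hr
    exact Ideal.mem_map_of_mem _ hr

/-- Every prime of the localization containing a nonzero ideal is the maximal ideal,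
given height-one hypothesis. -/
lemma aux_radical (hM : M.IsMaximal) (hht : ∀ P : Ideal R, P.IsPrime → P < M → P = ⊥)
    (C : Ideal (Localization.AtPrime M)) (hC0 : C ≠ ⊥) (hCt : C ≠ ⊤) :
    (C.comap (algebraMap R (Localization.AtPrime M))).radical = M := by
  have key : C.radical = IsLocalRing.maximalIdeal (Localization.AtPrime M) := by
    rw [Ideal.radical_eq_sInf]
    apply le_antisymm
    · exact sInf_le ⟨IsLocalRing.le_maximalIdeal hCt, (IsLocalRing.maximalIdeal.isMaximal _).isPrime⟩
    · refine le_sInf fun P ⟨hCP, hPprime⟩ => ?_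
      have hPle : P.comap (algebraMap R (Localization.AtPrime M)) ≤ M := by
        have := Ideal.comap_mono (f := algebraMap R (Localization.AtPrime M))
          (IsLocalRing.le_maximalIdeal hPprime.ne_top)
        rwa [← Ideal.under_def (A := R) (P := IsLocalRing.maximalIdeal (Localization.AtPrime M)), Localization.AtPrime.comap_maximalIdeal (hI := hp)] at this
      rcases lt_or_eq_of_le hPle with hlt | heq
      · exfalso
        have := hht _ (hPprime.comap _) hlt
        have hPbot : P = ⊥ := by
          rw [← IsLocalization.map_comap M.primeCompl (Localization.AtPrime M) P, Ideal.under_def, this,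
            Ideal.map_bot]
        exact hC0 (le_bot_iff.1 (hPbot ▸ hCP))
      · rw [← IsLocalization.map_comap M.primeCompl (Localization.AtPrime M) P, Ideal.under_def, heq,
          Localization.AtPrime.map_eq_maximalIdeal]
  rw [← Ideal.comap_radical, key, ← Ideal.under_def, Localization.AtPrime.comap_maximalIdeal]

end Aux

theorem stmt_17 {R : Type*} [CommRing R] [IsDomain R] (M : Ideal R)
    (hM : M.IsMaximal) (hne : M ≠ ⊥)
    (hht : ∀ P : Ideal R, P.IsPrime → P < M → P = ⊥)
    (I : Ideal (@Localization.AtPrime R _ M hM.isPrime)) :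
    (∀ C D : Ideal (@Localization.AtPrime R _ M hM.isPrime), I = C * D →
      I.comap (algebraMap R (@Localization.AtPrime R _ M hM.isPrime)) =
        C.comap (algebraMap R (@Localization.AtPrime R _ M hM.isPrime)) *
          D.comap (algebraMap R (@Localization.AtPrime R _ M hM.isPrime))) ∧
    (∀ J : Ideal (@Localization.AtPrime R _ M hM.isPrime),
      J.comap (algebraMap R (@Localization.AtPrime R _ M hM.isPrime)) =
        I.comap (algebraMap R (@Localization.AtPrime R _ M hM.isPrime)) →
          J = I) := by
  haveI := hM.isPrime
  have hinj : Function.Injective (algebraMap R (Localization.AtPrime M)) :=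
    IsLocalization.injective (Localization.AtPrime M) M.primeCompl_le_nonZeroDivisors
  constructor
  · intro C D hCD
    by_cases hC0 : C = ⊥
    · subst hC0
      rw [Ideal.bot_mul] at hCD
      rw [hCD, Ideal.comap_bot_of_injective _ hinj, Ideal.bot_mul]
    by_cases hD0 : D = ⊥
    · subst hD0
      rw [Ideal.mul_bot] at hCD
      rw [hCD, Ideal.comap_bot_of_injective _ hinj, Ideal.mul_bot]
    by_cases hCt : C = ⊤
    · subst hCt
      rw [Ideal.top_mul] at hCD
      rw [hCD, Ideal.comap_top, Ideal.top_mul]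
    by_cases hDt : D = ⊤
    · subst hDt
      rw [Ideal.mul_top] at hCD
      rw [hCD, Ideal.comap_top, Ideal.mul_top]
    set A := C.comap (algebraMap R (Localization.AtPrime M)) with hA
    set B := D.comap (algebraMap R (Localization.AtPrime M)) with hB
    have hradA : A.radical = M := aux_radical M hM hht C hC0 hCt
    have hradB : B.radical = M := aux_radical M hM hht D hD0 hDt
    have hrad : (A * B).radical = M := by
      rw [Ideal.radical_mul, hradA, hradB, inf_idem]
    have hprim : (A * B).IsPrimary :=
      Ideal.isPrimary_of_isMaximal_radical (hrad ▸ hM)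
    have hmap : (A * B).map (algebraMap R (Localization.AtPrime M)) = I := by
      rw [Ideal.map_mul, hA, hB, IsLocalization.map_comap M.primeCompl,
        IsLocalization.map_comap M.primeCompl, hCD]
    rw [← hmap, aux_comap_map M (A * B) hprim hrad]
  · intro J hJ
    rw [← IsLocalization.map_comap M.primeCompl (Localization.AtPrime M) J, Ideal.under_def, hJ,
      IsLocalization.map_comap M.primeCompl]
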